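/- Let m ≥ 3 and let DW_m be the simple graph with vertex set (Z/mZ) × (Z/3Z) in which (x,i) is adjacent to (x+1,j) for all i ≠ j in Z/3Z. Then DW_m is connected, 4-valent and arc-transitive, and the permutation of its vertex set fixing every vertex (x,0) and swapping (x,1) with (x,2) for every x ∈ Z/mZ is an automorphism of DW_m fixing exactly m of the 3m vertices; in particular DW_m has a non-identity automorphism g with fpr_{V DW_m}(g) = 1/3. -/

import Mathlib

open SimpleGraph

noncomputable def fpr {V : Type*} (g : V → V) : ℚ :=
  (Nat.card {v : V // g v = v} : ℚ) / (Nat.card V : ℚ)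

/-- The Praeger–Xu graph `C(r,s)`. -/
def praegerXu (r s : ℕ) : SimpleGraph (ZMod r × (Fin s → ZMod 2)) :=
  SimpleGraph.fromRel (fun a b =>
    b.1 = a.1 + 1 ∧ ∀ (i : Fin s) (h : (i : ℕ) + 1 < s), b.2 i = a.2 ⟨(i : ℕ) + 1, h⟩)

/-- The Split Praeger–Xu graph `S(C(r,s))`; `1` plays the role of `+`, `0` of `−`. -/
def splitPraegerXu (r s : ℕ) : SimpleGraph ((ZMod r × (Fin s → ZMod 2)) × Fin 2) :=
  SimpleGraph.fromRel (fun a b => a.2 = 1 ∧ b.2 = 0 ∧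
    (a.1 = b.1 ∨ (b.1.1 = a.1.1 + 1 ∧
      ∀ (i : Fin s) (h : (i : ℕ) + 1 < s), b.1.2 i = a.1.2 ⟨(i : ℕ) + 1, h⟩)))

def VertexTransitive {V : Type*} (Γ : SimpleGraph V) : Prop :=
  ∀ u v : V, ∃ e : Γ ≃g Γ, e u = v

def EdgeTransitive {V : Type*} (Γ : SimpleGraph V) : Prop :=
  ∀ u v u' v' : V, Γ.Adj u v → Γ.Adj u' v' →
    ∃ e : Γ ≃g Γ, (e u = u' ∧ e v = v') ∨ (e u = v' ∧ e v = u')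

def ArcTransitive {V : Type*} (Γ : SimpleGraph V) : Prop :=
  ∀ u v u' v' : V, Γ.Adj u v → Γ.Adj u' v' → ∃ e : Γ ≃g Γ, e u = u' ∧ e v = v'

-- exceptional graphs
def Psi1 : SimpleGraph (Fin 5) := ⊤

def Psi2 : SimpleGraph (Fin 5 × Fin 2) :=
  SimpleGraph.fromRel (fun a b => a.2 ≠ b.2 ∧ a.1 ≠ b.1)

def Psi3 : SimpleGraph ({v : Fin 3 → ZMod 2 // v ≠ 0} × Fin 2) :=
  SimpleGraph.fromRel (fun a b => a.2 ≠ b.2 ∧ ∑ i, a.1.1 i * b.1.1 i ≠ 0)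

instance : Fact (Nat.Prime 3) := ⟨by norm_num⟩

def Psi4 : SimpleGraph (Projectivization (ZMod 3) (Fin 3 → ZMod 3) × Fin 2) :=
  SimpleGraph.fromRel (fun a b => a.2 ≠ b.2 ∧ ∑ i, a.1.rep i * b.1.rep i = 0)

def kneser (n k : ℕ) : SimpleGraph {s : Finset (Fin n) // s.card = k} :=
  SimpleGraph.fromRel (fun a b => Disjoint a.1 b.1)

def Psi5 : SimpleGraph {s : Finset (Fin 7) // s.card = 3} := kneser 7 3

def doubleCover {V : Type*} (G : SimpleGraph V) : SimpleGraph (V × Fin 2) :=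
  SimpleGraph.fromRel (fun a b => a.2 ≠ b.2 ∧ G.Adj a.1 b.1)

def Psi6 := doubleCover Psi5

def Lambda1 : SimpleGraph (Fin 4) := ⊤
def Lambda2 : SimpleGraph (Fin 3 ⊕ Fin 3) := completeBipartiteGraph (Fin 3) (Fin 3)
def cubeGraph : SimpleGraph (Fin 3 → ZMod 2) :=
  SimpleGraph.fromRel (fun a b => (Finset.univ.filter fun i => a i ≠ b i).card = 1)
def Lambda3 := cubeGraph
def Lambda4 : SimpleGraph {s : Finset (Fin 5) // s.card = 2} := kneser 5 2
def Lambda5 : SimpleGraph ({v : Fin 3 → ZMod 2 // v ≠ 0} × Fin 2) :=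
  SimpleGraph.fromRel (fun a b => a.2 ≠ b.2 ∧ ∑ i, a.1.1 i * b.1.1 i = 0)
def Lambda6 := doubleCover Lambda4

-- tau, rho, sigma
def tauFun (r s : ℕ) (i : ZMod r) :
    ZMod r × (Fin s → ZMod 2) → ZMod r × (Fin s → ZMod 2) :=
  fun a => (a.1, fun j => if a.1 + ((j : ℕ) : ZMod r) = i then a.2 j + 1 else a.2 j)

lemma tauFun_involutive (r s : ℕ) (i : ZMod r) : Function.Involutive (tauFun r s i) := by
  intro a
  unfold tauFun
  refine Prod.ext rfl ?_
  funext j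
  by_cases h : a.1 + ((j : ℕ) : ZMod r) = i
  · simp only [h, if_pos]
    rw [add_assoc, show (1 : ZMod 2) + 1 = 0 from rfl, add_zero]
  · simp [h]

/-- The permutation `τ_i` of the vertices of `C(r,s)`. -/
def tauPerm (r s : ℕ) (i : ZMod r) : Equiv.Perm (ZMod r × (Fin s → ZMod 2)) :=
  (tauFun_involutive r s i).toPerm

def rhoPerm (r s : ℕ) : Equiv.Perm (ZMod r × (Fin s → ZMod 2)) :=
  (Equiv.addRight (1 : ZMod r)).prodCongr (Equiv.refl _)

def sigmaFun (r s : ℕ) :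
    ZMod r × (Fin s → ZMod 2) → ZMod r × (Fin s → ZMod 2) :=
  fun a => (1 - (s : ZMod r) - a.1, fun j => a.2 j.rev)

lemma sigmaFun_involutive (r s : ℕ) : Function.Involutive (sigmaFun r s) := by
  intro a
  unfold sigmaFun
  refine Prod.ext ?_ ?_
  · simp only
    ring
  · funext j
    simp [Fin.rev_rev]

def sigmaPerm (r s : ℕ) : Equiv.Perm (ZMod r × (Fin s → ZMod 2)) :=
  (sigmaFun_involutive r s).toPerm

/-- The group `K = ⟨τ_i : i ∈ ZMod r⟩`. -/
def pxK (r s : ℕ) : Subgroup (Equiv.Perm (ZMod r × (Fin s → ZMod 2))) :=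
  Subgroup.closure (Set.range (tauPerm r s))

/-- The group `H = ⟨K, ρ, σ⟩`. -/
def pxH (r s : ℕ) : Subgroup (Equiv.Perm (ZMod r × (Fin s → ZMod 2))) :=
  Subgroup.closure (Set.range (tauPerm r s) ∪ {rhoPerm r s, sigmaPerm r s})

/-- Quotient graph of `Γ` by the orbits of a group action. -/
def quotGraph {V : Type*} (G : Type*) [Group G] [MulAction G V] (Γ : SimpleGraph V) :
    SimpleGraph (MulAction.orbitRel.Quotient G V) :=
  SimpleGraph.fromRel (fun a b => ∃ u v : V,
    (Quotient.mk (MulAction.orbitRel G V) u : MulAction.orbitRel.Quotient G V) = a ∧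
    (Quotient.mk (MulAction.orbitRel G V) v : MulAction.orbitRel.Quotient G V) = b ∧
    Γ.Adj u v)


/-- The graph `DW_m` on `(ZMod m) × (ZMod 3)`: `(x,i)` is adjacent to `(x+1,j)` for
all `i ≠ j`. -/
def DW (m : ℕ) : SimpleGraph (ZMod m × ZMod 3) :=
  SimpleGraph.fromRel (fun a b => b.1 = a.1 + 1 ∧ a.2 ≠ b.2)

/-- The permutation of the vertices of `DW_m` fixing every `(x,0)` and swapping
`(x,1)` with `(x,2)`. -/
def dwSigma (m : ℕ) : Equiv.Perm (ZMod m × ZMod 3) :=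
  (Equiv.refl (ZMod m)).prodCongr (Equiv.neg (ZMod 3))

lemma dw_adj (m : ℕ) (a b : ZMod m × ZMod 3) :
    (DW m).Adj a b ↔ (b.1 = a.1 + 1 ∨ a.1 = b.1 + 1) ∧ a.2 ≠ b.2 := by
  rw [DW, fromRel_adj]
  constructor
  · rintro ⟨hne, ⟨h1, h2⟩ | ⟨h1, h2⟩⟩
    · exact ⟨Or.inl h1, h2⟩
    · exact ⟨Or.inr h1, Ne.symm h2⟩
  · rintro ⟨h1 | h1, h2⟩
    · exact ⟨fun h => h2 (congrArg Prod.snd h), Or.inl ⟨h1, h2⟩⟩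
    · exact ⟨fun h => h2 (congrArg Prod.snd h), Or.inr ⟨h1, Ne.symm h2⟩⟩

def affEquiv (m : ℕ) (δ c : ZMod m) (hδ : δ * δ = 1) : ZMod m ≃ ZMod m where
  toFun y := δ * y + c
  invFun y := δ * (y - c)
  left_inv y := by
    show δ * (δ * y + c - c) = y
    have : δ * (δ * y + c - c) = δ * δ * y := by ring
    rw [this, hδ, one_mul]
  right_inv y := by
    show δ * (δ * (y - c)) + c = y
    have : δ * (δ * (y - c)) + c = δ * δ * (y - c) + c := by ring
    rw [this, hδ]; ring

lemma aff_step (m : ℕ) (δ c : ZMod m) (hδ : δ * δ = 1) (a b : ZMod m) :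
    δ * b + c = δ * a + c + 1 ↔ b = a + δ := by
  constructor
  · intro h; linear_combination δ * h - (b - a) * hδ
  · intro h; linear_combination δ * h + hδ

lemma aff_pres (m : ℕ) (δ c : ZMod m) (hδ : δ = 1 ∨ δ = -1) (a b : ZMod m) :
    (δ * b + c = δ * a + c + 1 ∨ δ * a + c = δ * b + c + 1) ↔ (b = a + 1 ∨ a = b + 1) := by
  have h2 : δ * δ = 1 := by rcases hδ with h | h <;> rw [h] <;> ring
  rw [aff_step m δ c h2, aff_step m δ c h2]
  rcases hδ with h | h <;> subst h
  · rfl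
  · constructor
    · rintro (h | h)
      · right; linear_combination -h
      · left; linear_combination -h
    · rintro (h | h)
      · right; linear_combination -h
      · left; linear_combination -h

def dwIso (m : ℕ) (δ c : ZMod m) (hδ : δ = 1 ∨ δ = -1) (π : Equiv.Perm (ZMod 3)) :
    DW m ≃g DW m where
  toEquiv := (affEquiv m δ c (by rcases hδ with h | h <;> rw [h] <;> ring)).prodCongr π
  map_rel_iff' := by
    intro a b
    simp only [Equiv.prodCongr_apply, Prod.map, dw_adj, affEquiv, Equiv.coe_fn_mk]
    rw [aff_pres m δ c hδ]
    simp [π.injective.ne_iff]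

lemma exists_perm3 (i j i' j' : ZMod 3) (hij : i ≠ j) (hij' : i' ≠ j') :
    ∃ π : Equiv.Perm (ZMod 3), π i = i' ∧ π j = j' := by
  refine ⟨(Equiv.swap i i').trans (Equiv.swap (Equiv.swap i i' j) j'), ?_, ?_⟩
  · simp only [Equiv.trans_apply, Equiv.swap_apply_left]
    apply Equiv.swap_apply_of_ne_of_ne
    · intro h
      exact hij ((Equiv.swap i i').injective (by rw [Equiv.swap_apply_left]; exact h))
    · exact hij'
  · simp [Equiv.trans_apply, Equiv.swap_apply_left]

lemma dwIso_apply (m : ℕ) (δ c : ZMod m) (hδ : δ = 1 ∨ δ = -1) (π : Equiv.Perm (ZMod 3))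
    (a : ZMod m × ZMod 3) : dwIso m δ c hδ π a = (δ * a.1 + c, π a.2) := rfl

lemma dw_arc (m : ℕ) : ArcTransitive (DW m) := by
  intro u v u' v' huv huv'
  rw [dw_adj] at huv huv'
  obtain ⟨hd, hne⟩ := huv
  obtain ⟨hd', hne'⟩ := huv'
  obtain ⟨π, hπ1, hπ2⟩ := exists_perm3 u.2 v.2 u'.2 v'.2 hne hne'
  rcases hd with h | h <;> rcases hd' with h' | h'
  · refine ⟨dwIso m 1 (u'.1 - u.1) (Or.inl rfl) π, ?_, ?_⟩ <;>
      rw [dwIso_apply] <;> refine Prod.ext ?_ (by assumption)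
    · ring
    · simp only [one_mul, h, h']; ring
  · refine ⟨dwIso m (-1) (u'.1 + u.1) (Or.inr rfl) π, ?_, ?_⟩ <;>
      rw [dwIso_apply] <;> refine Prod.ext ?_ (by assumption)
    · ring
    · simp only [h, h']; ring
  · refine ⟨dwIso m (-1) (u'.1 + u.1) (Or.inr rfl) π, ?_, ?_⟩ <;>
      rw [dwIso_apply] <;> refine Prod.ext ?_ (by assumption)
    · ring
    · simp only [h, h']; ring
  · refine ⟨dwIso m 1 (u'.1 - u.1) (Or.inl rfl) π, ?_, ?_⟩ <;>
      rw [dwIso_apply] <;> refine Prod.ext ?_ (by assumption)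
    · ring
    · simp only [one_mul]
      linear_combination h' - h

lemma exists_third : ∀ i i' : ZMod 3, ∃ j : ZMod 3, j ≠ i ∧ j ≠ i' := by decide

lemma succ_ne3 : ∀ i : ZMod 3, i + 1 ≠ i := by decide

lemma dw_two_step (m : ℕ) (x : ZMod m) (i i' : ZMod 3) :
    (DW m).Reachable (x, i) (x, i') := by
  obtain ⟨j, hj, hj'⟩ := exists_third i i'
  have h1 : (DW m).Adj (x, i) (x + 1, j) := by
    rw [dw_adj]; exact ⟨Or.inl rfl, Ne.symm hj⟩
  have h2 : (DW m).Adj (x + 1, j) (x, i') := by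
    rw [dw_adj]; exact ⟨Or.inr rfl, hj'⟩
  exact h1.reachable.trans h2.reachable

lemma dw_conn (m : ℕ) (hm : 3 ≤ m) : (DW m).Connected := by
  haveI : NeZero m := ⟨by omega⟩
  rw [connected_iff]
  refine ⟨?_, ⟨((0 : ZMod m), (0 : ZMod 3))⟩⟩
  have key : ∀ n : ℕ, ∀ i : ZMod 3, (DW m).Reachable (0, 0) ((n : ZMod m), i) := by
    intro n
    induction n with
    | zero => intro i; simpa using dw_two_step m 0 0 i
    | succ n ih =>
      intro i
      have h1 : (DW m).Adj ((n : ZMod m), i + 1) (((n + 1 : ℕ) : ZMod m), i) := by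
        rw [dw_adj]
        exact ⟨Or.inl (by push_cast; ring), succ_ne3 i⟩
      exact (ih (i + 1)).trans h1.reachable
  intro u v
  have hu : (DW m).Reachable (0, 0) u := by
    simpa only [ZMod.natCast_val, ZMod.cast_id, Prod.mk.eta] using key u.1.val u.2
  have hv : (DW m).Reachable (0, 0) v := by
    simpa only [ZMod.natCast_val, ZMod.cast_id, Prod.mk.eta] using key v.1.val v.2
  exact hu.symm.trans hv

lemma ne3_iff : ∀ i j : ZMod 3, i ≠ j ↔ (j = i + 1 ∨ j = i + 2) := by decide

lemma dw_degree (m : ℕ) (hm : 3 ≤ m) (v : ZMod m × ZMod 3) :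
    Nat.card ((DW m).neighborSet v) = 4 := by
  haveI : NeZero m := ⟨by omega⟩
  have h2 : v.1 + 1 ≠ v.1 - 1 := by
    intro h
    have h3 : ((2 : ℕ) : ZMod m) = 0 := by push_cast; linear_combination h
    rw [ZMod.natCast_eq_zero_iff] at h3
    have := Nat.le_of_dvd (by norm_num) h3
    omega
  have hset : (DW m).neighborSet v =
      {(v.1 + 1, v.2 + 1), (v.1 + 1, v.2 + 2), (v.1 - 1, v.2 + 1), (v.1 - 1, v.2 + 2)} := by
    ext w
    simp only [mem_neighborSet, dw_adj, Set.mem_insert_iff, Set.mem_singleton_iff]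
    constructor
    · rintro ⟨h1 | h1, h4⟩ <;> rw [ne3_iff] at h4 <;>
        rcases h4 with h4 | h4
      · exact Or.inl (Prod.ext h1 h4)
      · exact Or.inr (Or.inl (Prod.ext h1 h4))
      · exact Or.inr (Or.inr (Or.inl (Prod.ext (by linear_combination -h1) h4)))
      · exact Or.inr (Or.inr (Or.inr (Prod.ext (by linear_combination -h1) h4)))
    · rintro (h | h | h | h) <;> subst h <;> refine ⟨?_, ?_⟩
      · exact Or.inl rfl
      · rw [ne3_iff]; exact Or.inl rfl
      · exact Or.inl rfl
      · rw [ne3_iff]; exact Or.inr rfl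
      · exact Or.inr (by ring)
      · rw [ne3_iff]; exact Or.inl rfl
      · exact Or.inr (by ring)
      · rw [ne3_iff]; exact Or.inr rfl
  rw [hset, Nat.card_coe_set_eq]
  have e1 : ∀ a b : ZMod 3, (v.1 + 1, v.2 + a) ≠ (v.1 - 1, v.2 + b) :=
    fun a b h => h2 (congrArg Prod.fst h)
  have e2 : ∀ x : ZMod m, (x, v.2 + 1) ≠ (x, v.2 + 2) := by
    intro x h
    have := congrArg Prod.snd h
    simp only at this
    have : (1 : ZMod 3) = 2 := by linear_combination this
    exact absurd this (by decide)
  rw [Set.ncard_insert_of_notMem (by simp [e1, e2]), Set.ncard_insert_of_notMem (by simp [e1]),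
    Set.ncard_insert_of_notMem (by simp [e2]), Set.ncard_singleton]

lemma dw_sigma_aut (m : ℕ) (a b : ZMod m × ZMod 3) :
    (DW m).Adj (dwSigma m a) (dwSigma m b) ↔ (DW m).Adj a b := by
  simp only [dwSigma, Equiv.prodCongr_apply, Prod.map, Equiv.refl_apply, Equiv.neg_apply,
    dw_adj, ne_eq, neg_inj]

lemma neg_eq_self3 : ∀ i : ZMod 3, -i = i ↔ i = 0 := by decide

lemma dw_fixed_card (m : ℕ) (hm : 3 ≤ m) :
    Nat.card {a : ZMod m × ZMod 3 // dwSigma m a = a} = m := by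
  haveI : NeZero m := ⟨by omega⟩
  have key : ∀ a : ZMod m × ZMod 3, dwSigma m a = a ↔ a.2 = 0 := by
    intro a
    simp only [dwSigma, Equiv.prodCongr_apply, Prod.map, Equiv.refl_apply, Equiv.neg_apply,
      Prod.ext_iff]
    rw [neg_eq_self3]
    tauto
  have : Nat.card {a : ZMod m × ZMod 3 // dwSigma m a = a} = Nat.card (ZMod m) := by
    apply Nat.card_congr
    refine ⟨fun p => p.1.1, fun x => ⟨(x, 0), (key (x, 0)).mpr rfl⟩, ?_, fun x => rfl⟩
    rintro ⟨⟨x, i⟩, h⟩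
    have := (key _).mp h
    simp only at this
    subst this
    rfl
  rw [this, Nat.card_zmod]

lemma dw_total_card (m : ℕ) : Nat.card (ZMod m × ZMod 3) = 3 * m := by
  rw [Nat.card_prod, Nat.card_zmod, Nat.card_zmod]
  ring

lemma dw_fpr (m : ℕ) (hm : 3 ≤ m) : fpr (fun a => dwSigma m a) = 1 / 3 := by
  unfold fpr
  rw [show {v : ZMod m × ZMod 3 // (fun a => dwSigma m a) v = v} =
    {a : ZMod m × ZMod 3 // dwSigma m a = a} from rfl, dw_fixed_card m hm, dw_total_card]
  have hm0 : (m : ℚ) ≠ 0 := Nat.cast_ne_zero.mpr (by omega)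
  push_cast
  field_simp

/-- `DW_m` is connected, 4-valent and arc-transitive, and `dwSigma` is a
non-identity automorphism fixing exactly `m` of the `3m` vertices, so its
fixed-point ratio is exactly `1/3`. -/
theorem statement18 (m : ℕ) (hm : 3 ≤ m) :
    (DW m).Connected ∧
      (∀ v, Nat.card ((DW m).neighborSet v) = 4) ∧
      ArcTransitive (DW m) ∧
      (∀ a b, (DW m).Adj (dwSigma m a) (dwSigma m b) ↔ (DW m).Adj a b) ∧
      (∃ a, dwSigma m a ≠ a) ∧
      Nat.card {a : ZMod m × ZMod 3 // dwSigma m a = a} = m ∧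
      Nat.card (ZMod m × ZMod 3) = 3 * m ∧
      fpr (fun a => dwSigma m a) = 1 / 3 := by
  refine ⟨dw_conn m hm, fun v => dw_degree m hm v, dw_arc m, dw_sigma_aut m, ?_,
    dw_fixed_card m hm, dw_total_card m, dw_fpr m hm⟩
  refine ⟨((0 : ZMod m), (1 : ZMod 3)), fun h => ?_⟩
  have h2 := congrArg Prod.snd h
  simp only [dwSigma, Equiv.prodCongr_apply, Prod.map, Equiv.neg_apply] at h2
  exact absurd h2 (by decide)
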